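/- If f = g ∘ h where g is an irreducible local rule and h is a projection, then the reflected rule satisfies r̂(g ∘ h) = r̂g ∘ r̂h, where r̂h = r ∘ h ∘ r; consequently r̂f = f if and only if r̂g = g and r̂h = h. -/

import Mathlib

/-- `f` depends on coordinate `j`. -/
def RuleDependsOn {A : Type*} {n : ℕ} (f : (Fin n → A) → A) (j : Fin n) : Prop :=
  ∃ a b : Fin n → A, (∀ k, k ≠ j → a k = b k) ∧ f a ≠ f b

/-- Reflection of a word: `(r w)ₖ = w_{n+1-k}`. -/
def reflWord {A : Type*} {n : ℕ} (a : Fin n → A) : Fin n → A := fun k => a k.rev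

/-- Reflection operator on local rules: `r̂f = f ∘ r`. -/
def reflRule {A : Type*} {n : ℕ} (f : (Fin n → A) → A) : (Fin n → A) → A :=
  fun a => f (reflWord a)

/-- Reflection operator on projections (or any map `Aⁿ → Aᵐ`): `r̂h = r ∘ h ∘ r`. -/
def reflProj {A : Type*} {n m : ℕ} (h : (Fin n → A) → (Fin m → A)) :
    (Fin n → A) → (Fin m → A) :=
  fun a => reflWord (h (reflWord a))

/-- `h : Aⁿ → Aᵐ` is a projection. -/
def IsProjection {A : Type*} {n m : ℕ} (h : (Fin n → A) → (Fin m → A)) : Prop :=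
  ∃ p : Fin m → Fin n, StrictMono p ∧ ∀ a k, h a k = a (p k)

section Aux

variable {A : Type*} {n m : ℕ}

lemma reflWord_reflWord (a : Fin n → A) : reflWord (reflWord a) = a := by
  funext k; simp [reflWord, Fin.rev_rev]

/-- Extend a word `a : Aᵐ` to a word in `Aⁿ` whose restriction along `p` is `a`. -/
noncomputable def extFun (p : Fin m → Fin n) (c : A) (a : Fin m → A) : Fin n → A :=
  fun i => if hx : ∃ k, p k = i then a hx.choose else c

lemma extFun_apply {p : Fin m → Fin n} (hp : Function.Injective p) (c : A)
    (a : Fin m → A) (k : Fin m) : extFun p c a (p k) = a k := by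
  have hx : ∃ k', p k' = p k := ⟨k, rfl⟩
  rw [extFun, dif_pos hx]
  congr 1
  exact hp hx.choose_spec

lemma dependsOn_comp {p : Fin m → Fin n} (hp : Function.Injective p) (c : A)
    {g : (Fin m → A) → A} {k : Fin m} (hgk : RuleDependsOn g k) :
    RuleDependsOn (fun x => g (fun j => x (p j))) (p k) := by
  obtain ⟨a, b, hab, hne⟩ := hgk
  refine ⟨extFun p c a, extFun p c b, ?_, ?_⟩
  · intro i hi
    by_cases hx : ∃ k', p k' = i
    · rw [extFun, extFun]
      simp only [dif_pos hx]
      apply hab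
      intro heq
      apply hi
      rw [← hx.choose_spec, heq]
    · rw [extFun, extFun]
      simp only [dif_neg hx]
  · have ha : (fun j => extFun p c a (p j)) = a := funext (extFun_apply hp c a)
    have hb : (fun j => extFun p c b (p j)) = b := funext (extFun_apply hp c b)
    simpa [ha, hb] using hne

lemma not_dependsOn_comp {p : Fin m → Fin n} {g : (Fin m → A) → A} {i : Fin n}
    (hi : i ∉ Set.range p) : ¬ RuleDependsOn (fun x => g (fun j => x (p j))) i := by
  rintro ⟨a, b, hab, hne⟩
  exact hne (congrArg g (funext fun j => hab (p j) fun he => hi ⟨j, he⟩))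

/-- Uniqueness of the factorization into an irreducible rule and a projection. -/
lemma uniq_factor [Nonempty A] {g g' : (Fin m → A) → A} {p p' : Fin m → Fin n}
    (hp : StrictMono p) (hp' : StrictMono p')
    (hg : ∀ j, RuleDependsOn g j) (hg' : ∀ j, RuleDependsOn g' j)
    (heq : ∀ x : Fin n → A, g (fun k => x (p k)) = g' (fun k => x (p' k))) :
    p = p' ∧ g = g' := by
  have hfe : (fun x : Fin n → A => g (fun k => x (p k)))
      = (fun x => g' (fun k => x (p' k))) := funext heq
  have hrange : Set.range p = Set.range p' := by
    ext i
    constructor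
    · rintro ⟨k, rfl⟩
      by_contra hi
      have hd := dependsOn_comp hp.injective (Classical.arbitrary A) (hg k)
      rw [hfe] at hd
      exact not_dependsOn_comp hi hd
    · rintro ⟨k, rfl⟩
      by_contra hi
      have hd := dependsOn_comp hp'.injective (Classical.arbitrary A) (hg' k)
      rw [← hfe] at hd
      exact not_dependsOn_comp hi hd
  have hpp' : p = p' := (@StrictMono.range_inj (Fin m) (Fin n) inferInstance inferInstance
      (inferInstanceAs (WellFoundedLT (Fin m))) p p' hp hp').1 hrange
  refine ⟨hpp', ?_⟩
  funext a
  have h1 := heq (extFun p (Classical.arbitrary A) a)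
  rw [← hpp'] at h1
  rwa [funext (extFun_apply hp.injective (Classical.arbitrary A) a)] at h1

end Aux

theorem stmt10 {A : Type*} [Fintype A] {n m : ℕ}
    (g : (Fin m → A) → A) (h : (Fin n → A) → (Fin m → A))
    (hg : ∀ j, RuleDependsOn g j) (hh : IsProjection h)
    (f : (Fin n → A) → A) (hf : f = g ∘ h) :
    reflRule f = reflRule g ∘ reflProj h ∧
      (reflRule f = f ↔ reflRule g = g ∧ reflProj h = h) := by
  have part1 : reflRule f = reflRule g ∘ reflProj h := by
    funext a
    show f (reflWord a) = g (reflWord (reflWord (h (reflWord a))))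
    rw [reflWord_reflWord, hf]
    rfl
  refine ⟨part1, ?_, ?_⟩
  · -- forward direction
    intro hfr
    obtain ⟨p, hp, hph⟩ := hh
    rcases isEmpty_or_nonempty A with hA | hA
    · -- degenerate case: `A` is empty, hence `m > 0` and `n > 0` and all domains are empty
      rcases m with - | m'
      · exact (hA.false (g (fun i => i.elim0))).elim
      · rcases n with - | n'
        · exact (p 0).elim0
        · constructor
          · funext a; exact (hA.false (a 0)).elim
          · funext a; exact (hA.false (a 0)).elim
    · -- main case
      set p' : Fin m → Fin n := fun k => (p k.rev).rev with hp'def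
      have hp' : StrictMono p' := by
        intro i j hij
        show (p i.rev).rev < (p j.rev).rev
        rw [Fin.rev_lt_rev]
        exact hp (Fin.rev_lt_rev.2 hij)
      have hg' : ∀ j, RuleDependsOn (reflRule g) j := by
        intro j
        obtain ⟨a, b, hab, hne⟩ := hg j.rev
        refine ⟨reflWord a, reflWord b, ?_, ?_⟩
        · intro k hk
          exact hab k.rev (fun he => hk (by rw [← Fin.rev_rev k, he, Fin.rev_rev]))
        · show g (reflWord (reflWord a)) ≠ g (reflWord (reflWord b))
          rwa [reflWord_reflWord, reflWord_reflWord]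
      have hcomp : g ∘ h = reflRule g ∘ reflProj h := by
        rw [← hf, ← hfr]; exact part1
      have heq : ∀ x : Fin n → A,
          g (fun k => x (p k)) = reflRule g (fun k => x (p' k)) := by
        intro x
        have h1 := congrFun hcomp x
        simp only [Function.comp_apply] at h1
        have h2 : h x = fun k => x (p k) := funext (hph x)
        have h3 : reflProj h x = fun k => x (p' k) := by
          funext k
          show h (reflWord x) k.rev = x (p' k)
          rw [hph]
          rfl
        rw [h2, h3] at h1
        exact h1
      obtain ⟨hpp', hgg⟩ := uniq_factor hp hp' hg hg' heq
      refine ⟨hgg.symm, ?_⟩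
      funext a
      funext k
      show h (reflWord a) k.rev = h a k
      rw [hph, hph]
      show a (p k.rev).rev = a (p k)
      rw [show (p k.rev).rev = p k from (congrFun hpp' k).symm]
  · -- backward direction
    rintro ⟨hgr, hhr⟩
    rw [part1, hgr, hhr, hf]
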